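/- Every right unitary submonoid of the fundamental monoid Γ*(v) of a rooted directed graph (Γ, v) arises as the image of the fundamental monoid under some directed covering of rooted graphs (Γ̃, ṽ) → (Γ, v). -/

import Mathlib

structure DGraph : Type 1 where
  V : Type
  E : Type
  ι : E → V
  τ : E → V

namespace DGraph

/-- A directed path from `u` to `w` given by its list of edges. -/
inductive Path (G : DGraph) : G.V → G.V → List G.E → Prop
  | nil (v : G.V) : Path G v v []
  | cons (e : G.E) {w : G.V} {p : List G.E} :
      Path G (G.τ e) w p → Path G (G.ι e) w (e :: p)

/-- The list of vertices visited by a path `p` starting at `u`. -/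
def verts (G : DGraph) (u : G.V) (p : List G.E) : List G.V :=
  u :: p.map G.τ

/-- A simple directed path: a path visiting no vertex twice. -/
def SimplePath (G : DGraph) (u w : G.V) (p : List G.E) : Prop :=
  G.Path u w p ∧ (G.verts u p).Nodup

/-- `w` is reachable from `u` by a directed path. -/
def Reach (G : DGraph) (u w : G.V) : Prop := ∃ p, G.Path u w p

/-- A graph is rooted at `v` if every vertex is reachable from `v`. -/
def Rooted (G : DGraph) (v : G.V) : Prop := ∀ w, G.Reach v w

end DGraph


/-- A morphism of directed graphs. -/
structure DMorphism (G G' : DGraph) where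
  mapV : G.V → G'.V
  mapE : G.E → G'.E
  map_ι : ∀ e, mapV (G.ι e) = G'.ι (mapE e)
  map_τ : ∀ e, mapV (G.τ e) = G'.τ (mapE e)

namespace DMorphism

variable {G G' : DGraph}

/-- A directed immersion: the induced map on each star `St(v) → St(φ(v))`
is injective. -/
def Immersion (φ : DMorphism G G') : Prop :=
  ∀ e f : G.E, G.ι e = G.ι f → φ.mapE e = φ.mapE f → e = f

/-- A directed covering: surjective on vertices and bijective on each star. -/
def Covering (φ : DMorphism G G') : Prop :=
  Function.Surjective φ.mapV ∧ φ.Immersion ∧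
    ∀ (v : G.V) (e' : G'.E), G'.ι e' = φ.mapV v →
      ∃ e : G.E, G.ι e = v ∧ φ.mapE e = e'

end DMorphism


namespace DGraph

theorem path_append {G : DGraph} {u w x : G.V} {p q : List G.E}
    (hp : G.Path u w p) (hq : G.Path w x q) : G.Path u x (p ++ q) := by
  induction hp with
  | nil => exact hq
  | cons e hp ih => exact Path.cons e (ih hq)

theorem path_single {G : DGraph} (e : G.E) : G.Path (G.ι e) (G.τ e) [e] :=
  Path.cons e (Path.nil _)

section Cover

variable (G : DGraph) (v : G.V) (N : Set (List G.E))

def Pt := {x : G.V × List G.E // G.Path v x.1 x.2}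

def rel (x y : Pt G v) : Prop :=
  x.1.1 = y.1.1 ∧ ∀ r : List G.E, G.Path x.1.1 v r → (x.1.2 ++ r ∈ N ↔ y.1.2 ++ r ∈ N)

def ptSetoid : Setoid (Pt G v) where
  r := rel G v N
  iseqv := by
    constructor
    · exact fun x => ⟨rfl, fun _ _ => Iff.rfl⟩
    · rintro x y ⟨h1, h2⟩
      refine ⟨h1.symm, fun r hr => ?_⟩
      have hr' : G.Path x.1.1 v r := by rw [h1]; exact hr
      exact (h2 r hr').symm
    · rintro x y z ⟨h1, h2⟩ ⟨h3, h4⟩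
      refine ⟨h1.trans h3, fun r hr => ?_⟩
      have hr' : G.Path y.1.1 v r := by rw [← h1]; exact hr
      exact (h2 r hr).trans (h4 r hr')

def Vt := Quotient (ptSetoid G v N)

def succPt (x : Pt G v) (e : G.E) (he : G.ι e = x.1.1) : Pt G v :=
  ⟨(G.τ e, x.1.2 ++ [e]), path_append x.2 (by rw [← he]; exact path_single e)⟩

theorem rel_succ {x y : Pt G v} (h : rel G v N x y) (e : G.E)
    (hex : G.ι e = x.1.1) (hey : G.ι e = y.1.1) :
    rel G v N (succPt G v x e hex) (succPt G v y e hey) := by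
  refine ⟨rfl, fun r hr => ?_⟩
  have hr' : G.Path x.1.1 v (e :: r) := by
    rw [← hex]; exact Path.cons e hr
  have := h.2 (e :: r) hr'
  simpa [succPt, List.append_assoc] using this

def Et0 := {x : Pt G v × G.E // G.ι x.2 = x.1.1.1}

def etSetoid : Setoid (Et0 G v) where
  r x y := rel G v N x.1.1 y.1.1 ∧ x.1.2 = y.1.2
  iseqv := by
    constructor
    · exact fun x => ⟨(ptSetoid G v N).refl _, rfl⟩
    · rintro x y ⟨h1, h2⟩
      exact ⟨(ptSetoid G v N).symm h1, h2.symm⟩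
    · rintro x y z ⟨h1, h2⟩ ⟨h3, h4⟩
      exact ⟨(ptSetoid G v N).trans h1 h3, h2.trans h4⟩

def Et := Quotient (etSetoid G v N)

def mkV (x : Pt G v) : Vt G v N := Quotient.mk (ptSetoid G v N) x

def GtCov : DGraph where
  V := Vt G v N
  E := Et G v N
  ι := Quotient.lift (fun x : Et0 G v => mkV G v N x.1.1)
    (fun a b h => Quotient.sound h.1)
  τ := Quotient.lift (fun x : Et0 G v => mkV G v N (succPt G v x.1.1 x.1.2 x.2))
    (by
      rintro ⟨⟨xa, ea⟩, ha⟩ ⟨⟨xb, eb⟩, hb⟩ ⟨h1, h2⟩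
      dsimp at h1 h2 ha hb ⊢
      subst h2
      exact Quotient.sound (rel_succ G v N h1 ea ha hb))

def φCov : DMorphism (GtCov G v N) G where
  mapV := Quotient.lift (fun x : Pt G v => x.1.1) (fun a b h => h.1)
  mapE := Quotient.lift (fun x : Et0 G v => x.1.2) (fun a b h => h.2)
  map_ι := by
    rintro ⟨x⟩
    exact x.2.symm
  map_τ := by
    rintro ⟨x⟩
    rfl

theorem lift_path : ∀ {u w : G.V} {p2 : List G.E}, G.Path u w p2 →
    ∀ (p1 : List G.E) (h1 : G.Path v u p1),
    ∃ (q : List (Et G v N)) (h3 : G.Path v w (p1 ++ p2)),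
      (GtCov G v N).Path (mkV G v N ⟨(u, p1), h1⟩)
        (mkV G v N ⟨(w, p1 ++ p2), h3⟩) q ∧
      q.map (φCov G v N).mapE = p2 := by
  intro u w p2 h2
  induction h2 with
  | nil x =>
    intro p1 h1
    refine ⟨[], path_append h1 (Path.nil x), ?_, rfl⟩
    have : mkV G v N ⟨(x, p1 ++ []), path_append h1 (Path.nil x)⟩
        = mkV G v N ⟨(x, p1), h1⟩ := by
      apply congrArg
      apply Subtype.ext
      simp
    rw [this]
    exact Path.nil _
  | cons e hp ih =>
    intro p1 h1
    rename_i w' p'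
    set x0 : Et0 G v := ⟨(⟨(G.ι e, p1), h1⟩, e), rfl⟩ with hx0
    obtain ⟨q, h3, hq, hmap⟩ := ih (p1 ++ [e]) (path_append h1 (path_single e))
    have h3' : G.Path v w' (p1 ++ e :: p') := by
      have := h3; rwa [List.append_assoc] at this
    have heq : mkV G v N ⟨(w', (p1 ++ [e]) ++ p'), h3⟩
        = mkV G v N ⟨(w', p1 ++ e :: p'), h3'⟩ := by
      apply congrArg
      apply Subtype.ext
      simp
    rw [heq] at hq
    have hcons : (GtCov G v N).Path (mkV G v N ⟨(G.ι e, p1), h1⟩)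
        (mkV G v N ⟨(w', p1 ++ e :: p'), h3'⟩)
        (Quotient.mk (etSetoid G v N) x0 :: q) :=
      Path.cons (G := GtCov G v N) (Quotient.mk (etSetoid G v N) x0) hq
    refine ⟨Quotient.mk (etSetoid G v N) x0 :: q, h3', hcons, ?_⟩
    exact congrArg (List.cons e) hmap

theorem proj_path : ∀ {x y : Vt G v N} {q : List (Et G v N)},
    (GtCov G v N).Path x y q →
    ∀ {u : G.V} (p1 : List G.E) (h1 : G.Path v u p1),
    x = mkV G v N ⟨(u, p1), h1⟩ →
    ∃ (w : G.V) (h2 : G.Path v w (p1 ++ q.map (φCov G v N).mapE)),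
      y = mkV G v N ⟨(w, p1 ++ q.map (φCov G v N).mapE), h2⟩ := by
  intro x y q h
  change (GtCov G v N).V at x y
  change List (GtCov G v N).E at q
  induction h with
  | nil z =>
    intro u p1 h1 hx
    have h2 : G.Path v u (p1 ++ List.map (φCov G v N).mapE []) := by
      simpa using h1
    refine ⟨u, h2, hx.trans ?_⟩
    apply congrArg
    apply Subtype.ext
    simp
  | cons et hq ih =>
    intro u p1 h1 hx
    rename_i w0 q0
    obtain ⟨a, ha⟩ := Quotient.exists_rep et
    subst ha
    obtain ⟨⟨pt, e⟩, he⟩ := a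
    have hrel : rel G v N pt ⟨(u, p1), h1⟩ := Quotient.exact hx
    have he' : G.ι e = u := he.trans hrel.1
    have h1' : G.Path v (G.τ e) (p1 ++ [e]) :=
      path_append h1 (by rw [← he']; exact path_single e)
    have hx' : (GtCov G v N).τ (Quotient.mk (etSetoid G v N) ⟨(pt, e), he⟩)
        = mkV G v N ⟨(G.τ e, p1 ++ [e]), h1'⟩ :=
      Quotient.sound (rel_succ G v N hrel e he he')
    obtain ⟨w, h2, hy⟩ := ih (p1 ++ [e]) h1' hx'
    have hl : p1 ++ List.map (φCov G v N).mapE (Quotient.mk (etSetoid G v N) ⟨(pt, e), he⟩ :: q0) =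
        (p1 ++ [e]) ++ List.map (φCov G v N).mapE q0 := by
      exact (List.append_assoc p1 [e] _).symm
    have h2' : G.Path v w (p1 ++ List.map (φCov G v N).mapE
        (Quotient.mk (etSetoid G v N) ⟨(pt, e), he⟩ :: q0)) := by
      rw [hl]; exact h2
    refine ⟨w, h2', ?_⟩
    rw [hy]
    apply congrArg
    apply Subtype.ext
    rw [Prod.ext_iff]
    exact ⟨rfl, hl.symm⟩

end Cover

/-- Every right unitary submonoid `N` of the fundamental monoid of a rooted
directed graph `(Γ, v)` arises as the image of the fundamental monoid of some
directed covering of rooted graphs `(Γ̃, ṽ) → (Γ, v)`. -/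
theorem right_unitary_realized_by_covering (G : DGraph) (v : G.V)
    (hroot : G.Rooted v) (N : Set (List G.E))
    (hloops : ∀ n ∈ N, G.Path v v n)
    (hone : ([] : List G.E) ∈ N)
    (hmul : ∀ p ∈ N, ∀ q ∈ N, p ++ q ∈ N)
    (hru : ∀ p ∈ N, ∀ q : List G.E, G.Path v v q → p ++ q ∈ N → q ∈ N) :
    ∃ (Gt : DGraph) (vt : Gt.V) (φ : DMorphism Gt G),
      Gt.Rooted vt ∧ φ.mapV vt = v ∧ φ.Covering ∧
        {q : List G.E | ∃ p : List Gt.E, Gt.Path vt vt p ∧ p.map φ.mapE = q}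
          = N := by
  refine ⟨GtCov G v N, mkV G v N ⟨(v, []), Path.nil v⟩, φCov G v N, ?_, rfl, ⟨?_, ?_, ?_⟩, ?_⟩
  · intro x
    induction x using Quotient.ind with
    | _ x =>
      obtain ⟨⟨u, p⟩, h⟩ := x
      obtain ⟨q, h3, hq, -⟩ := lift_path G v N h [] (Path.nil v)
      exact ⟨q, hq⟩
  · intro u
    obtain ⟨p, hp⟩ := hroot u
    exact ⟨mkV G v N ⟨(u, p), hp⟩, rfl⟩
  · intro e f h1 h2
    obtain ⟨a, rfl⟩ := Quotient.exists_rep e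
    obtain ⟨b, rfl⟩ := Quotient.exists_rep f
    exact Quotient.sound ⟨Quotient.exact h1, h2⟩
  · intro x e' h
    induction x using Quotient.ind with
    | _ pt => exact ⟨Quotient.mk (etSetoid G v N) ⟨(pt, e'), h⟩, rfl, rfl⟩
  · ext q
    constructor
    · rintro ⟨p, hp, rfl⟩
      obtain ⟨w, h2, hy⟩ := proj_path G v N hp [] (Path.nil v) rfl
      have hrel : rel G v N ⟨(v, []), Path.nil v⟩
          ⟨(w, [] ++ List.map (φCov G v N).mapE p), h2⟩ := Quotient.exact hy
      have := (hrel.2 [] (Path.nil v)).mp hone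
      simpa using this
    · intro hq
      obtain ⟨p, h3, hp, hmap⟩ := lift_path G v N (hloops q hq) [] (Path.nil v)
      have heq : mkV G v N ⟨(v, [] ++ q), h3⟩ = mkV G v N ⟨(v, []), Path.nil v⟩ := by
        apply Quotient.sound
        refine ⟨rfl, fun r hr => ?_⟩
        constructor
        · intro h
          exact hru q hq r hr h
        · intro h
          exact hmul q hq r h
      rw [heq] at hp
      exact ⟨p, hp, hmap⟩


end DGraph
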